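/- Tightness of the linear agreement bound: let 2 ≤ k ≤ m and write m-1 = (k-1)q + ρ with q ≥ 1 and 0 ≤ ρ ≤ k-2. For every n ≥ m there exists a (k,m)-agreeable linear society with n voters (approval sets being closed bounded intervals in ℝ) whose agreement number is exactly ⌈(n-ρ)/q⌉; it can be constructed from q pairwise disjoint intervals, each repeated either ⌈(n-ρ)/q⌉ or ⌊(n-ρ)/q⌋ times, together with ρ additional pairwise disjoint intervals disjoint from all others. -/

import Mathlib

/-- **Tightness of the linear agreement bound.**  Let `2 ≤ k ≤ m` and write
`m - 1 = (k-1)q + ρ` with `q ≥ 1`, `0 ≤ ρ ≤ k - 2`.  For every `n ≥ m` there is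
a `(k,m)`-agreeable linear society of `n` voters whose approval sets are closed
bounded intervals and whose agreement number is exactly `⌈(n - ρ)/q⌉`. -/
theorem linear_agreement_bound_tight
    (k m q ρ n : ℕ) (hk : 2 ≤ k) (hkm : k ≤ m)
    (hq : 1 ≤ q) (hρ : ρ ≤ k - 2) (hdiv : m - 1 = (k - 1) * q + ρ)
    (hnm : m ≤ n) :
    ∃ A : Fin n → Set ℝ,
      (∀ v, ∃ a b : ℝ, a ≤ b ∧ A v = Set.Icc a b) ∧
      (∀ W : Finset (Fin n), W.card = m →
        ∃ K ⊆ W, K.card = k ∧ (⋂ v ∈ K, A v).Nonempty) ∧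
      (∃ p : ℝ, ({v : Fin n | p ∈ A v}.ncard : ℤ) = ⌈((n : ℚ) - ρ) / q⌉) ∧
      (∀ p : ℝ, ({v : Fin n | p ∈ A v}.ncard : ℤ) ≤ ⌈((n : ℚ) - ρ) / q⌉) := by
  classical
  have hρn : ρ < n := by omega
  obtain ⟨N, hNdef⟩ : ∃ N, N = n - ρ := ⟨_, rfl⟩
  have hN1 : 1 ≤ N := by omega
  obtain ⟨c, hcdef⟩ : ∃ c, c = (N + q - 1) / q := ⟨_, rfl⟩
  have hdm : q * c + (N + q - 1) % q = N + q - 1 := by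
    rw [hcdef]; exact Nat.div_add_mod _ _
  have hmlt : (N + q - 1) % q < q := Nat.mod_lt _ (by omega)
  have hF1 : q * c < N + q := by omega
  have hF2 : N ≤ q * c := by omega
  have hF3 : c ≤ N := by
    by_contra hcon
    have h1 : q * (N + 1) ≤ q * c := Nat.mul_le_mul_left q (by omega)
    have h2 : N ≤ q * N := Nat.le_mul_of_pos_left N (by omega)
    have h3 : q * (N + 1) = q * N + q := by ring
    omega
  have hF4 : 1 ≤ c := by
    rcases Nat.eq_zero_or_pos c with h | h
    · rw [h, mul_zero] at hF2; omega
    · exact h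
  -- the ceiling equals c
  have hcast : ((n : ℚ) - ρ) = (N : ℚ) := by
    rw [hNdef, Nat.cast_sub hρn.le]
  have hqQ : (0 : ℚ) < q := by exact_mod_cast (by omega : 0 < q)
  have hceil : ⌈((n : ℚ) - ρ) / q⌉ = (c : ℤ) := by
    rw [hcast, Int.ceil_eq_iff]
    constructor
    · rw [lt_div_iff₀ hqQ]
      have h1 : (q : ℚ) * c < N + q := by exact_mod_cast hF1
      push_cast
      nlinarith
    · rw [div_le_iff₀ hqQ]
      have h1 : (N : ℚ) ≤ q * c := by exact_mod_cast hF2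
      push_cast
      nlinarith
  -- the construction
  set f : Fin n → ℝ := fun v =>
    if (v : ℕ) < ρ then -1 - (v : ℕ) else ((((v : ℕ) - ρ) / c : ℕ) : ℝ) with hfdef
  refine ⟨fun v => Set.Icc (f v) (f v), fun v => ⟨f v, f v, le_refl _, rfl⟩, ?_, ?_, ?_⟩
  · -- (k,m)-agreeability
    intro W hW
    set W' : Finset (Fin n) := W.filter (fun v => ρ ≤ (v : ℕ)) with hW'def
    have hsplit : W'.card + (W.filter (fun v : Fin n => ¬ ρ ≤ (v : ℕ))).card = m := by
      rw [hW'def]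
      rw [Finset.card_filter_add_card_filter_not (fun v : Fin n => ρ ≤ (v : ℕ))]
      exact hW
    have hcompl : (W.filter (fun v : Fin n => ¬ ρ ≤ (v : ℕ))).card ≤ ρ := by
      have h := Finset.card_le_card_of_injOn (f := fun v : Fin n => (v : ℕ))
        (s := W.filter (fun v : Fin n => ¬ ρ ≤ (v : ℕ))) (t := Finset.range ρ)
        (fun v hv => by
          simp only [Finset.coe_filter, Set.mem_setOf_eq, Finset.mem_coe, Finset.mem_filter] at hv
          simp only [Finset.coe_range, Set.mem_Iio, Finset.mem_coe, Finset.mem_range]; omega)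
        (fun a _ b _ hab => Fin.val_injective hab)
      simpa using h
    have hW'card : (k - 1) * q + 1 ≤ W'.card := by omega
    have hcomm : q * (k - 1) = (k - 1) * q := Nat.mul_comm _ _
    have hpig := Finset.exists_lt_card_fiber_of_mul_lt_card_of_maps_to
      (s := W') (t := Finset.range q) (n := k - 1) (f := fun v : Fin n => ((v : ℕ) - ρ) / c)
      (fun v hv => by
        simp only [Finset.mem_range]
        have hv' : ρ ≤ (v : ℕ) := (Finset.mem_filter.mp hv).2
        have : (v : ℕ) - ρ < q * c := by
          have := v.isLt; omega
        exact Nat.div_lt_iff_lt_mul (by omega) |>.mpr (by omega)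
      ) (by rw [Finset.card_range]; omega)
    obtain ⟨g, hg, hgcard⟩ := hpig
    have hk' : k ≤ (W'.filter (fun v : Fin n => ((v : ℕ) - ρ) / c = g)).card := by omega
    obtain ⟨K, hKsub, hKcard⟩ := Finset.exists_subset_card_eq hk'
    refine ⟨K, ?_, hKcard, ⟨(g : ℝ), ?_⟩⟩
    · exact hKsub.trans ((Finset.filter_subset _ _).trans (Finset.filter_subset _ _))
    · simp only [Set.mem_iInter]
      intro v hv
      have hv' := hKsub hv
      simp only [hW'def, Finset.mem_filter] at hv'
      obtain ⟨⟨_, hvρ⟩, hvg⟩ := hv'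
      have : f v = (g : ℝ) := by
        simp only [hfdef, if_neg (not_lt.mpr hvρ), hvg]
      rw [this]
      exact Set.mem_Icc.mpr ⟨le_refl _, le_refl _⟩
  · -- exact agreement at p = 0
    refine ⟨(0 : ℝ), ?_⟩
    have hmap : ∀ i : Fin c, ρ + (i : ℕ) < n := by
      intro i; have := i.isLt; omega
    set e : Fin c → Fin n := fun i => ⟨ρ + (i : ℕ), hmap i⟩ with hedef
    have hinj : Function.Injective e := by
      intro i j hij
      have : ρ + (i : ℕ) = ρ + (j : ℕ) := congrArg Fin.val hij
      exact Fin.val_injective (by omega)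
    have hS : {v : Fin n | (0 : ℝ) ∈ Set.Icc (f v) (f v)} = Set.range e := by
      ext v
      simp only [Set.mem_setOf_eq, Set.mem_Icc, Set.mem_range]
      constructor
      · rintro ⟨h1, h2⟩
        have hfv : f v = 0 := le_antisymm h1 h2
        simp only [hfdef] at hfv
        by_cases hvρ : (v : ℕ) < ρ
        · rw [if_pos hvρ] at hfv
          have : (0:ℝ) ≤ (v : ℕ) := Nat.cast_nonneg _
          linarith
        · rw [if_neg hvρ] at hfv
          have hdiv0 : ((v : ℕ) - ρ) / c = 0 := by exact_mod_cast hfv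
          have hlt : (v : ℕ) - ρ < c := ((Nat.div_eq_zero_iff).mp hdiv0).resolve_left (by omega)
          refine ⟨⟨(v : ℕ) - ρ, hlt⟩, ?_⟩
          rw [hedef]
          apply Fin.val_injective
          simp only []
          omega
      · rintro ⟨i, rfl⟩
        have h1 : ¬ ((e i : ℕ) < ρ) := by
          rw [hedef]; simp only []; omega
        have h2 : ((e i : ℕ) - ρ) / c = 0 := by
          rw [hedef]; simp only []
          have := i.isLt
          exact Nat.div_eq_of_lt (by omega)
        simp only [hfdef, if_neg h1, h2, Nat.cast_zero]
        exact ⟨le_refl _, le_refl _⟩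
    rw [hS, hceil]
    have : (Set.range e).ncard = c := by
      rw [← Set.image_univ, Set.ncard_image_of_injective _ hinj, Set.ncard_univ]
      simp
    rw [this]
  · -- upper bound
    intro p
    rw [hceil]
    have key : {v : Fin n | p ∈ Set.Icc (f v) (f v)}.ncard ≤ c := by
      set T : Set (Fin n) := {v : Fin n | p ∈ Set.Icc (f v) (f v)} with hTdef
      have hT : ∀ v, v ∈ T ↔ f v = p := by
        intro v
        simp only [hTdef, Set.mem_setOf_eq, Set.mem_Icc]
        constructor
        · rintro ⟨h1, h2⟩; exact le_antisymm h1 h2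
        · rintro rfl; exact ⟨le_refl _, le_refl _⟩
      rcases Set.eq_empty_or_nonempty T with hemp | ⟨v₀, hv₀⟩
      · rw [hemp]; simp
      · have hfv₀ : f v₀ = p := (hT v₀).mp hv₀
        by_cases hv₀ρ : (v₀ : ℕ) < ρ
        · -- p is negative singleton, fiber = {v₀}
          have hp : p = -1 - ((v₀ : ℕ) : ℝ) := by
            rw [← hfv₀]; simp only [hfdef, if_pos hv₀ρ]
          have hsub : T ⊆ {v₀} := by
            intro v hv
            have hfv : f v = p := (hT v).mp hv
            simp only [hfdef] at hfv
            by_cases hvρ : (v : ℕ) < ρ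
            · rw [if_pos hvρ] at hfv
              rw [hp] at hfv
              have : ((v : ℕ) : ℝ) = ((v₀ : ℕ) : ℝ) := by linarith
              have : (v : ℕ) = (v₀ : ℕ) := by exact_mod_cast this
              simp [Fin.val_injective this]
            · rw [if_neg hvρ] at hfv
              rw [hp] at hfv
              have h1 : (0:ℝ) ≤ ((((v : ℕ) - ρ) / c : ℕ) : ℝ) := Nat.cast_nonneg _
              have h2 : (0:ℝ) ≤ ((v₀ : ℕ) : ℝ) := Nat.cast_nonneg _
              linarith
          calc T.ncard ≤ ({v₀} : Set (Fin n)).ncard :=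
                Set.ncard_le_ncard hsub (Set.finite_singleton _)
            _ = 1 := Set.ncard_singleton _
            _ ≤ c := hF4
        · -- p corresponds to group g
          set g : ℕ := ((v₀ : ℕ) - ρ) / c with hgdef
          have hp : p = (g : ℝ) := by
            rw [← hfv₀]; simp only [hfdef, if_neg hv₀ρ, hgdef]
          have hmem : ∀ v ∈ T, ρ + g * c ≤ (v : ℕ) ∧ (v : ℕ) < ρ + g * c + c := by
            intro v hv
            have hfv : f v = p := (hT v).mp hv
            simp only [hfdef] at hfv
            rw [hp] at hfv
            by_cases hvρ : (v : ℕ) < ρ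
            · rw [if_pos hvρ] at hfv
              have h2 : (0:ℝ) ≤ ((v : ℕ) : ℝ) := Nat.cast_nonneg _
              have h3 : (0:ℝ) ≤ (g : ℝ) := Nat.cast_nonneg _
              exfalso; linarith
            · rw [if_neg hvρ] at hfv
              have hvg : ((v : ℕ) - ρ) / c = g := by exact_mod_cast hfv
              have hdm2 := Nat.div_add_mod ((v : ℕ) - ρ) c
              rw [hvg] at hdm2
              have hm2 : ((v : ℕ) - ρ) % c < c := Nat.mod_lt _ (by omega)
              have hcg : c * g = g * c := Nat.mul_comm _ _
              omega
          have := Set.ncard_le_ncard_of_injOn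
            (fun v : Fin n => (v : ℕ) - (ρ + g * c))
            (fun v hv => by
              have := hmem v hv
              show (v : ℕ) - (ρ + g * c) ∈ Finset.range c
              simp only [Finset.mem_range]; omega)
            (fun a ha b hb hab => by
              have h1 := hmem a ha
              have h2 := hmem b hb
              apply Fin.val_injective
              simp only at hab
              omega)
            (Finset.finite_toSet _)
          calc T.ncard ≤ ((Finset.range c : Finset ℕ) : Set ℕ).ncard := this
            _ = c := by rw [Set.ncard_coe_finset, Finset.card_range]
      
    exact_mod_cast key
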